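/- Let (X,S) be a primitive unimodular proper S-adic subshift over the alphabet A and let μ, μ' be S-invariant Borel probability measures on X. If μ([a]) = μ'([a]) for all a ∈ A, then μ = μ' (in particular μ(U) = μ'(U) for every clopen subset U of X). -/

import Mathlib

open MeasureTheory Filter

section SadicPrelude

variable {A : Type*}

/-- The shift map on bi-infinite words. -/
def shift (x : ℤ → A) : ℤ → A := fun n => x (n + 1)

/-- The word `w` occurs (as a factor) in the bi-infinite word `x`. -/
def OccursIn (w : List A) (x : ℤ → A) : Prop :=
  ∃ i : ℤ, ∀ k : Fin w.length, x (i + (k.1 : ℤ)) = w.get k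

/-- The language of a subshift `X`. -/
def Lang (X : Set (ℤ → A)) : Set (List A) := {w | ∃ x ∈ X, OccursIn w x}

/-- Apply a morphism (substitution) to a word, by concatenation. -/
def wordApply (σ : A → List A) (w : List A) : List A := w.flatMap σ

/-- Composition of morphisms: first apply `τ`, then `σ`. -/
def morComp (σ τ : A → List A) : A → List A := fun a => wordApply σ (τ a)

/-- A morphism is non-erasing if images of letters are nonempty. -/
def NonErasing (σ : A → List A) : Prop := ∀ a, σ a ≠ []

/-- Incidence matrix of a morphism: entry `(b,a)` is the number of occurrences of `b` in `σ a`. -/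
def incMat [Fintype A] [DecidableEq A] (σ : A → List A) : Matrix A A ℤ :=
  Matrix.of fun b a => ((σ a).count b : ℤ)

/-- A morphism is unimodular if its incidence matrix has determinant ±1. -/
def IsUnimodular [Fintype A] [DecidableEq A] (σ : A → List A) : Prop :=
  (incMat σ).det = 1 ∨ (incMat σ).det = -1

/-- Left proper: all images start with the same letter. -/
def IsLeftProper (σ : A → List A) : Prop := ∃ b : A, ∀ a, (σ a).head? = some b

/-- Right proper: all images end with the same letter. -/
def IsRightProper (σ : A → List A) : Prop := ∃ b : A, ∀ a, (σ a).getLast? = some b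

/-- Proper: left and right proper. -/
def IsProper (σ : A → List A) : Prop := IsLeftProper σ ∧ IsRightProper σ

/-- `compFrom τ n m` is the composition `τ_n ∘ τ_{n+1} ∘ ⋯ ∘ τ_{n+m-1}`. -/
def compFrom (τ : ℕ → A → List A) (n : ℕ) : ℕ → A → List A
  | 0 => fun a => [a]
  | m + 1 => morComp (compFrom τ n m) (τ (n + m))

/-- `compSeq τ n` is the composition `τ_0 ∘ τ_1 ∘ ⋯ ∘ τ_{n-1}`. -/
def compSeq (τ : ℕ → A → List A) : ℕ → A → List A := compFrom τ 0

/-- The maximal length of images of letters under `τ_0 ∘ ⋯ ∘ τ_{n-1}` tends to infinity. -/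
def GrowsUnbounded [Fintype A] (τ : ℕ → A → List A) : Prop :=
  Tendsto (fun n => Finset.univ.sup fun a : A => (compSeq τ n a).length) atTop atTop

/-- A directive sequence is primitive if for all `n` there is `m > 0` such that every letter
occurs in every image of `τ_n ∘ ⋯ ∘ τ_{n+m-1}`. -/
def IsPrimitive (τ : ℕ → A → List A) : Prop :=
  ∀ n : ℕ, ∃ m : ℕ, 0 < m ∧ ∀ a b : A, b ∈ compFrom τ n m a

/-- The language of a directive sequence: all factors of the images `τ_0 ∘ ⋯ ∘ τ_{n-1}(a)`. -/
def SadicLang (τ : ℕ → A → List A) : Set (List A) :=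
  {w | ∃ (n : ℕ) (a : A), w <:+: compSeq τ n a}

/-- The S-adic subshift generated by a directive sequence. -/
def SadicShift (τ : ℕ → A → List A) : Set (ℤ → A) :=
  {x | ∀ w : List A, OccursIn w x → w ∈ SadicLang τ}

/-- The shift map restricted to an invariant set `X`. -/
def shiftOn (X : Set (ℤ → A)) (h : ∀ x ∈ X, shift x ∈ X) : X → X :=
  fun x => ⟨shift x.1, h x.1 x.2⟩

/-- The cylinder of a letter `a` inside `X`. -/
def cylLetter (X : Set (ℤ → A)) (a : A) : Set X := {x : X | x.1 0 = a}

/-- The cylinder of a word `w` inside `X`. -/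
def cylWord (X : Set (ℤ → A)) (w : List A) : Set X :=
  {x : X | ∀ k : Fin w.length, x.1 (k.1 : ℤ) = w.get k}

/-- `μ` is a `T`-invariant Borel probability measure. -/
def InvProb {Y : Type*} [MeasurableSpace Y] (T : Y → Y) (μ : Measure Y) : Prop :=
  IsProbabilityMeasure μ ∧ MeasurePreserving T μ μ

/-- A real-valued function is balanced for the dynamical system given by `T`. -/
def IsBalanced {Y : Type*} (T : Y → Y) (f : Y → ℝ) : Prop :=
  ∃ C : ℝ, 0 < C ∧ ∀ x y : Y, ∀ n : ℕ,
    |∑ i ∈ Finset.range (n + 1), (f (T^[i] x) - f (T^[i] y))| ≤ C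

end SadicPrelude

open MeasureTheory Filter

section Part1

variable {A : Type*} [DecidableEq A]

/-- number of indices `i < N` at which `w` occurs as a prefix of `z.drop i`. -/
def occCnt (w z : List A) (N : ℕ) : ℕ :=
  ((Finset.range N).filter (fun i => w <+: z.drop i)).card

lemma occCnt_le (w z : List A) (N : ℕ) : occCnt w z N ≤ N := by
  simpa [occCnt] using Finset.card_filter_le (Finset.range N) _

lemma occCnt_succ (w z : List A) (N : ℕ) :
    occCnt w z (N + 1) = occCnt w z N + (if w <+: z.drop N then 1 else 0) := by
  unfold occCnt
  rw [Finset.range_add_one, Finset.filter_insert]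
  split
  · rw [Finset.card_insert_of_notMem (by simp)]
  · simp

lemma occCnt_mono (w z : List A) {M N : ℕ} (h : M ≤ N) :
    occCnt w z M ≤ occCnt w z N := by
  unfold occCnt
  exact Finset.card_le_card (Finset.filter_subset_filter _ (by simpa using Finset.range_subset_range.2 h))

lemma occCnt_add_le (w z : List A) (M K : ℕ) :
    occCnt w z (M + K) ≤ occCnt w z M + K := by
  induction K with
  | zero => simp
  | succ k ih =>
      rw [← add_assoc, occCnt_succ]
      split <;> omega

/-- splitting positions at a block boundary. -/
lemma occCnt_append_split (w y z : List A) (M : ℕ) :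
    occCnt w (y ++ z) (y.length + M) = occCnt w (y ++ z) y.length + occCnt w z M := by
  induction M with
  | zero => simp [occCnt]
  | succ k ih =>
      rw [← add_assoc, occCnt_succ, ih, occCnt_succ, List.drop_length_add_append]
      ring

omit [DecidableEq A] in
lemma take_drop_append_of_le {z x : List A} {i n : ℕ} (h : i + n ≤ z.length) :
    ((z ++ x).drop i).take n = (z.drop i).take n := by
  rw [List.drop_append, Nat.sub_eq_zero_of_le (by omega), List.drop_zero,
    List.take_append_of_le_length (by rw [List.length_drop]; omega)]

omit [DecidableEq A] in
/-- occurrence at `i` only depends on letters `i..i+|w|`. -/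
lemma prefix_drop_congr {z x y : List A} {w : List A} {i : ℕ} (h : i + w.length ≤ z.length) :
    (w <+: (z ++ x).drop i) ↔ (w <+: (z ++ y).drop i) := by
  rw [List.prefix_iff_eq_take, List.prefix_iff_eq_take,
    take_drop_append_of_le h, take_drop_append_of_le h]

/-- the window comparison: counts over the first `|z|` positions of `z ++ x` and `z ++ y`
differ by at most `|w|`. -/
lemma occCnt_tail_compare (w z x y : List A) :
    occCnt w (z ++ x) z.length ≤ occCnt w (z ++ y) z.length + w.length := by
  rcases le_or_gt z.length w.length with h | h
  · calc occCnt w (z ++ x) z.length ≤ z.length := occCnt_le _ _ _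
      _ ≤ occCnt w (z ++ y) z.length + w.length := by omega
  · have hK : z.length - w.length + w.length = z.length := by omega
    have heq : occCnt w (z ++ x) (z.length - w.length)
        = occCnt w (z ++ y) (z.length - w.length) := by
      unfold occCnt
      congr 1
      refine Finset.filter_congr fun i hi => ?_
      simp only [Finset.mem_range] at hi
      exact prefix_drop_congr (z := z) (x := x) (y := y) (w := w) (i := i) (by omega)
    calc occCnt w (z ++ x) z.length
        ≤ occCnt w (z ++ x) (z.length - w.length) + w.length := by
          have h2 := occCnt_add_le w (z ++ x) (z.length - w.length) w.length
          rwa [hK] at h2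
      _ = occCnt w (z ++ y) (z.length - w.length) + w.length := by rw [heq]
      _ ≤ occCnt w (z ++ y) z.length + w.length := by
          have := occCnt_mono w (z ++ y) (Nat.sub_le z.length w.length)
          omega

end Part1
section Part2

variable {A : Type*} [DecidableEq A]

omit [DecidableEq A] in
lemma prefix_wordApply_append {σ : A → List A} {p : List A} (hp : ∀ a, p <+: σ a)
    (V : List A) : p <+: wordApply σ V ++ p := by
  cases V with
  | nil => simp [wordApply]
  | cons a V =>
      rw [wordApply, List.flatMap_cons, List.append_assoc]
      exact (hp a).trans (List.prefix_append _ _)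

omit [DecidableEq A] in
/-- occurrences inside a block only see the block and the common prefix lookahead. -/
lemma prefix_block_congr {w p t y : List A} (hw : w.length ≤ p.length + 1)
    (hpt : p <+: t) {i : ℕ} (hi : i < y.length) :
    (w <+: (y ++ t).drop i) ↔ (w <+: (y ++ p).drop i) := by
  obtain ⟨t', rfl⟩ := hpt
  rw [← List.append_assoc]
  exact prefix_drop_congr (z := y ++ p) (x := t') (y := []) (w := w)
    (by rw [List.length_append]; omega) |>.trans (by rw [List.append_nil])

/-- Lemma A: exact count of occurrences over the image of a word, with lookahead `p`. -/
lemma occCnt_wordApply {σ : A → List A} {p w : List A} (hp : ∀ a, p <+: σ a)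
    (hw : w.length ≤ p.length + 1) (V : List A) :
    occCnt w (wordApply σ V ++ p) (wordApply σ V).length
      = (V.map (fun a => occCnt w (σ a ++ p) (σ a).length)).sum := by
  induction V with
  | nil => simp [wordApply, occCnt]
  | cons a V ih =>
      have hflat : wordApply σ (a :: V) = σ a ++ wordApply σ V := by
        rw [wordApply, List.flatMap_cons]; rfl
      rw [hflat, List.length_append, List.append_assoc, occCnt_append_split, ih]
      have hfirst : occCnt w (σ a ++ (wordApply σ V ++ p)) (σ a).length
          = occCnt w (σ a ++ p) (σ a).length := by
        unfold occCnt
        congr 1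
        refine Finset.filter_congr fun i hi => ?_
        simp only [Finset.mem_range] at hi
        exact prefix_block_congr hw (prefix_wordApply_append hp V) hi
      rw [hfirst, List.map_cons, List.sum_cons]

/-- regrouping a sum over letters of a word. -/
lemma map_sum_eq_count_sum [Fintype A] (g : A → ℕ) (l : List A) :
    (l.map g).sum = ∑ a : A, l.count a * g a := by
  induction l with
  | nil => simp
  | cons x l ih =>
      rw [List.map_cons, List.sum_cons, ih]
      have hsplit : ∀ a : A, (x :: l).count a * g a
          = l.count a * g a + (if x = a then g a else 0) := by
        intro a
        rw [List.count_cons]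
        by_cases h : x = a <;> simp [h, add_mul]
      rw [Finset.sum_congr rfl (fun a _ => hsplit a), Finset.sum_add_distrib,
        Finset.sum_ite_eq]
      simp [add_comm]

lemma length_wordApply [Fintype A] (σ : A → List A) (l : List A) :
    (wordApply σ l).length = ∑ a : A, l.count a * (σ a).length := by
  rw [wordApply, List.length_flatMap, ← map_sum_eq_count_sum]

lemma count_wordApply [Fintype A] (σ : A → List A) (l : List A) (b : A) :
    (wordApply σ l).count b = ∑ a : A, l.count a * (σ a).count b := by
  rw [wordApply, List.count_flatMap, ← map_sum_eq_count_sum]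
  rfl

/-- occurrences of a single letter: `occCnt [b] z |z| = z.count b`. -/
lemma occCnt_singleton (b : A) (z : List A) : occCnt [b] z z.length = z.count b := by
  induction z with
  | nil => simp [occCnt]
  | cons c z ih =>
      have h := occCnt_append_split [b] [c] z z.length
      simp only [List.singleton_append, List.length_singleton] at h
      have h1 : occCnt [b] (c :: z) 1 = if b = c then 1 else 0 := by
        rw [show (1:ℕ) = 0 + 1 from rfl, occCnt_succ]
        have : ([b] <+: (c :: z).drop 0) ↔ b = c := by
          simp [List.cons_prefix_cons]
        simp [occCnt, this]
      have hlen : (c :: z).length = 1 + z.length := by simp [add_comm]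
      rw [hlen, h, h1, ih, List.count_cons]
      by_cases hbc : b = c
      · subst hbc; simp [add_comm]
      · have hcb : (c == b) = false := by
          simp only [beq_eq_false_iff_ne, ne_eq]
          exact fun h => hbc h.symm
        simp [hbc, hcb]

end Part2
section Part3

variable {A : Type*} [DecidableEq A]

omit [DecidableEq A] in
/-- aligned decomposition: a prefix of an image decomposes into blocks plus a short rest. -/
lemma aligned_decomp {θ : A → List A} {H : ℕ} (hH : ∀ a, (θ a).length ≤ H) :
    ∀ (V u t : List A), u ++ t = wordApply θ V →
      ∃ V₂ e₂ : List A, u = wordApply θ V₂ ++ e₂ ∧ e₂.length ≤ H := by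
  intro V
  induction V with
  | nil =>
      intro u t h
      simp only [wordApply, List.flatMap_nil, List.append_eq_nil_iff] at h
      exact ⟨[], [], by simp [wordApply, h.1], by simp⟩
  | cons a V ih =>
      intro u t h
      rw [wordApply, List.flatMap_cons] at h
      by_cases hu : u.length ≤ (θ a).length
      · refine ⟨[], u, by simp [wordApply], ?_⟩
        exact hu.trans (hH a)
      · push_neg at hu
        have hθ : θ a = u.take (θ a).length := by
          have h3 : (θ a ++ V.flatMap θ).take (θ a).length = (u ++ t).take (θ a).length := by
            rw [h]
          rw [List.take_left, List.take_append_of_le_length hu.le] at h3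
          exact h3
        have hrest : u.drop (θ a).length ++ t = wordApply θ V := by
          have h4 : (u ++ t).drop (θ a).length = V.flatMap θ := by
            rw [h, List.drop_left]
          rw [List.drop_append,
            Nat.sub_eq_zero_of_le hu.le, List.drop_zero] at h4
          exact h4
        obtain ⟨V₂, e₂, hu', he₂⟩ := ih (u.drop (θ a).length) t hrest
        refine ⟨a :: V₂, e₂, ?_, he₂⟩
        have hsplit : wordApply θ (a :: V₂) ++ e₂ = θ a ++ (wordApply θ V₂ ++ e₂) := by
          rw [wordApply, List.flatMap_cons, List.append_assoc]; rfl
        have h2 := List.take_append_drop (θ a).length u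
        rw [← hθ] at h2
        rw [hsplit, ← hu']
        exact h2.symm
  
omit [DecidableEq A] in
/-- any factor of an image decomposes into a short prefix, blocks, and a short suffix. -/
lemma infix_decomp {θ : A → List A} {H : ℕ} (hH : ∀ a, (θ a).length ≤ H) :
    ∀ (V s u t : List A), s ++ u ++ t = wordApply θ V →
      ∃ V₂ e₁ e₂ : List A, u = e₁ ++ wordApply θ V₂ ++ e₂ ∧ e₁.length ≤ H ∧ e₂.length ≤ H := by
  intro V
  induction V with
  | nil =>
      intro s u t h
      simp only [wordApply, List.flatMap_nil, List.append_eq_nil_iff] at h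
      exact ⟨[], [], [], by simp [wordApply, h.1.2], by simp, by simp⟩
  | cons a V ih =>
      intro s u t h
      rw [wordApply, List.flatMap_cons] at h
      by_cases hs : (θ a).length ≤ s.length
      · have hrest : s.drop (θ a).length ++ u ++ t = wordApply θ V := by
          have h4 : (s ++ u ++ t).drop (θ a).length = V.flatMap θ := by
            rw [h, List.drop_left]
          rw [List.append_assoc, List.drop_append,
            Nat.sub_eq_zero_of_le hs, List.drop_zero, ← List.append_assoc] at h4
          exact h4
        exact ih _ u t hrest
      · push_neg at hs
        by_cases hu : s.length + u.length ≤ (θ a).length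
        · refine ⟨[], u, [], by simp [wordApply], ?_, by simp⟩
          calc u.length ≤ (θ a).length := by omega
            _ ≤ H := hH a
        · push_neg at hu
          set d := (θ a).length - s.length with hd
          have hrest : u.drop d ++ t = wordApply θ V := by
            have h5 : ((s ++ u) ++ t).drop (θ a).length = V.flatMap θ := by
              rw [show (s ++ u) ++ t = s ++ u ++ t from rfl, h, List.drop_left]
            rw [List.drop_append, List.length_append,
              Nat.sub_eq_zero_of_le hu.le, List.drop_zero,
              List.drop_append, List.drop_eq_nil_of_le hs.le,
              List.nil_append] at h5
            exact h5
          obtain ⟨V₂, e₂, hu', he₂⟩ := aligned_decomp hH V (u.drop d) t hrest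
          refine ⟨V₂, u.take d, e₂, ?_, ?_, he₂⟩
          · rw [List.append_assoc, ← hu', List.take_append_drop]
          · calc (u.take d).length ≤ d := by simp
              _ ≤ (θ a).length := by omega
              _ ≤ H := hH a

end Part3
section Part4

variable {A : Type*} [DecidableEq A] [Fintype A]

/-- The main counting estimate: for a factor `u` of an image of `θ`, there is a block-count
vector `m` approximating simultaneously all occurrence counts. -/
lemma main_count_estimate {θ : A → List A} {H : ℕ} (hH : ∀ a, (θ a).length ≤ H)
    {V u : List A} (hinf : u <:+: wordApply θ V) :
    ∃ m : A → ℕ, (∑ a : A, m a * (θ a).length ≤ u.length) ∧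
      ∀ w p : List A, w.length ≤ p.length + 1 → (∀ a, p <+: θ a) →
        occCnt w u u.length ≤ (∑ a : A, m a * occCnt w (θ a ++ p) (θ a).length)
            + (2 * H + w.length)
        ∧ (∑ a : A, m a * occCnt w (θ a ++ p) (θ a).length)
            ≤ occCnt w u u.length + (2 * H + w.length) := by
  obtain ⟨s, t, hst⟩ := hinf
  obtain ⟨V₂, e₁, e₂, hu, he₁, he₂⟩ := infix_decomp hH V s u t hst
  refine ⟨fun a => V₂.count a, ?_, ?_⟩
  · beta_reduce
    have hlen : (wordApply θ V₂).length = ∑ a : A, V₂.count a * (θ a).length :=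
      length_wordApply θ V₂
    have : u.length = e₁.length + ((wordApply θ V₂).length + e₂.length) := by
      rw [hu]; simp [List.length_append, add_assoc]
    omega
  · intro w p hwp hp
    beta_reduce
    have hsum : (∑ a : A, V₂.count a * occCnt w (θ a ++ p) (θ a).length)
        = occCnt w (wordApply θ V₂ ++ p) (wordApply θ V₂).length := by
      rw [occCnt_wordApply hp hwp V₂, map_sum_eq_count_sum]
    set Z := wordApply θ V₂ ++ e₂ with hZ
    have husplit : occCnt w u u.length
        = occCnt w (e₁ ++ Z) e₁.length + occCnt w Z ((wordApply θ V₂).length + e₂.length) := by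
      have hul : u.length = e₁.length + ((wordApply θ V₂).length + e₂.length) := by
        rw [hu]; simp [List.length_append, add_assoc]
      have hu' : u = e₁ ++ Z := by rw [hu, hZ, List.append_assoc]
      rw [hul, hu', occCnt_append_split]
    have hA1 : occCnt w (e₁ ++ Z) e₁.length ≤ H :=
      (occCnt_le _ _ _).trans he₁
    have hA2a : occCnt w Z (wordApply θ V₂).length
        ≤ occCnt w Z ((wordApply θ V₂).length + e₂.length) :=
      occCnt_mono _ _ (Nat.le_add_right _ _)
    have hA2b : occCnt w Z ((wordApply θ V₂).length + e₂.length)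
        ≤ occCnt w Z (wordApply θ V₂).length + H :=
      (occCnt_add_le _ _ _ _).trans (by omega)
    have hA3a : occCnt w Z (wordApply θ V₂).length
        ≤ occCnt w (wordApply θ V₂ ++ p) (wordApply θ V₂).length + w.length :=
      occCnt_tail_compare w (wordApply θ V₂) e₂ p
    have hA3b : occCnt w (wordApply θ V₂ ++ p) (wordApply θ V₂).length
        ≤ occCnt w Z (wordApply θ V₂).length + w.length :=
      occCnt_tail_compare w (wordApply θ V₂) p e₂
    rw [hsum]
    omega

end Part4
section Part5

variable {A : Type*}

lemma wordApply_wordApply (σ ρ : A → List A) (v : List A) :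
    wordApply σ (wordApply ρ v) = wordApply (morComp σ ρ) v := by
  unfold wordApply morComp wordApply
  exact List.flatMap_assoc

lemma compFrom_add (τ : ℕ → A → List A) (n m : ℕ) :
    ∀ k a, compFrom τ n (m + k) a = wordApply (compFrom τ n m) (compFrom τ (n + m) k a) := by
  intro k
  induction k with
  | zero =>
      intro a
      simp only [Nat.add_zero]
      show compFrom τ n m a = wordApply (compFrom τ n m) [a]
      rw [wordApply, List.flatMap_singleton]
  | succ k ih =>
      intro a
      have h1 : m + (k + 1) = (m + k) + 1 := by omega
      rw [h1]
      show wordApply (compFrom τ n (m + k)) (τ (n + (m + k)) a)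
        = wordApply (compFrom τ n m) (wordApply (compFrom τ (n + m) k) (τ ((n + m) + k) a))
      rw [wordApply_wordApply]
      have h2 : n + (m + k) = (n + m) + k := by omega
      rw [h2]
      show (τ ((n + m) + k) a).flatMap (fun x => compFrom τ n (m + k) x)
        = (τ ((n + m) + k) a).flatMap (morComp (compFrom τ n m) (compFrom τ (n + m) k))
      congr 1
      funext x
      exact ih x

lemma compFrom_length_pos {τ : ℕ → A → List A} (hner : ∀ N, NonErasing (τ N)) :
    ∀ m n a, 0 < (compFrom τ n m a).length := by
  intro m
  induction m with
  | zero => intro n a; simp [compFrom]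
  | succ m ih =>
      intro n a
      show 0 < (wordApply (compFrom τ n m) (τ (n + m) a)).length
      rcases hx : τ (n + m) a with _ | ⟨x, l⟩
      · exact absurd hx (hner (n + m) a)
      · rw [wordApply, List.flatMap_cons, List.length_append]
        have := ih n x
        omega

lemma wordApply_infix_of_mem {σ : A → List A} {x : A} {v : List A} (hx : x ∈ v) :
    σ x <:+: wordApply σ v := by
  obtain ⟨s, t, rfl⟩ := List.append_of_mem hx
  refine ⟨wordApply σ s, wordApply σ t, ?_⟩
  simp [wordApply, List.flatMap_append, List.flatMap_cons, List.append_assoc]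

/-- there are levels with all images arbitrarily long. -/
lemma exists_long_level {τ : ℕ → A → List A} [Fintype A] [Nonempty A]
    (hner : ∀ N, NonErasing (τ N)) (hgrow : GrowsUnbounded τ) (hprim : IsPrimitive τ)
    (L : ℕ) : ∃ n, ∀ a, L ≤ (compSeq τ n a).length := by
  have := (Filter.tendsto_atTop.1 hgrow) (L + 1)
  obtain ⟨n₁, hn₁⟩ := this.exists
  have hsup : L + 1 ≤ Finset.univ.sup fun a : A => (compSeq τ n₁ a).length := hn₁
  have : ∃ a₀ ∈ Finset.univ, L + 1 ≤ (compSeq τ n₁ a₀).length := by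
    rwa [← Finset.le_sup_iff (by simp : (⊥ : ℕ) < L + 1)]
  obtain ⟨a₀, -, ha₀⟩ := this
  obtain ⟨k, hk, hall⟩ := hprim n₁
  refine ⟨n₁ + k, fun a => ?_⟩
  have hdecomp : compSeq τ (n₁ + k) a
      = wordApply (compFrom τ 0 n₁) (compFrom τ n₁ k a) := by
    have := compFrom_add τ 0 n₁ k a
    simpa [compSeq] using this
  have hinf : compSeq τ n₁ a₀ <:+: compSeq τ (n₁ + k) a := by
    rw [hdecomp]
    exact wordApply_infix_of_mem (hall a a₀)
  calc L ≤ L + 1 := by omega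
    _ ≤ (compSeq τ n₁ a₀).length := ha₀
    _ ≤ _ := hinf.length_le

/-- there is a level all whose images share a common prefix of any prescribed length. -/
lemma exists_common_prefix {τ : ℕ → A → List A} [Fintype A] [Nonempty A]
    (hner : ∀ N, NonErasing (τ N)) (hgrow : GrowsUnbounded τ) (hprim : IsPrimitive τ)
    (hprop : ∀ N, IsProper (τ N)) (ℓ : ℕ) :
    ∃ n p, (∀ a, p <+: compSeq τ n a) ∧ ℓ ≤ p.length + 1 := by
  obtain ⟨m, hm⟩ := exists_long_level hner hgrow hprim ℓ
  obtain ⟨β, hβ⟩ := (hprop m).1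
  set q := compSeq τ m β with hq
  have hqlen : ℓ ≤ q.length := hm β
  have hq_pref : ∀ a, q <+: compSeq τ (m + 1) a := by
    intro a
    have hdec : compSeq τ (m + 1) a = wordApply (compFrom τ 0 m) (compFrom τ m 1 a) := by
      have := compFrom_add τ 0 m 1 a
      simpa [compSeq] using this
    have h1 : compFrom τ m 1 a = τ m a := by
      show wordApply (compFrom τ m 0) (τ (m + 0) a) = τ m a
      simp only [Nat.add_zero]
      show (τ m a).flatMap (fun b => [b]) = τ m a
      exact List.flatMap_singleton' _
    rcases hx : τ m a with _ | ⟨c, r⟩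
    · exact absurd hx (hner m a)
    · have hc : c = β := by
        have := hβ a
        rw [hx] at this
        simpa using this
      rw [hdec, h1, hx, hc, wordApply, List.flatMap_cons]
      exact List.prefix_append _ _
  refine ⟨m + 1, q.take (ℓ - 1), fun a => (List.take_prefix _ _).trans (hq_pref a), ?_⟩
  rw [List.length_take]
  omega

/-- any word of the language is a factor of an image of any fixed level morphism. -/
lemma lang_infix_level {τ : ℕ → A → List A} [Nonempty A]
    (hprim : IsPrimitive τ) {u : List A} (hu : u ∈ SadicLang τ) (n : ℕ) :
    ∃ V, u <:+: wordApply (compSeq τ n) V := by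
  obtain ⟨K, a, hK⟩ := hu
  have climb : ∀ (d K : ℕ) (a : A), ∃ K' b, K + d ≤ K' ∧ compSeq τ K a <:+: compSeq τ K' b := by
    intro d
    induction d with
    | zero => intro K a; exact ⟨K, a, by omega, List.infix_rfl⟩
    | succ d ih =>
        intro K a
        obtain ⟨k, hk, hall⟩ := hprim K
        have b₀ : A := Classical.arbitrary A
        have hstep : compSeq τ K a <:+: compSeq τ (K + k) b₀ := by
          have hdec : compSeq τ (K + k) b₀
              = wordApply (compFrom τ 0 K) (compFrom τ K k b₀) := by
            have := compFrom_add τ 0 K k b₀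
            simpa [compSeq] using this
          rw [hdec]
          exact wordApply_infix_of_mem (hall b₀ a)
        obtain ⟨K', b, hge, hinf⟩ := ih (K + k) b₀
        exact ⟨K', b, by omega, hstep.trans hinf⟩
  obtain ⟨K', b, hge, hinf⟩ := climb n K a
  refine ⟨compFrom τ n (K' - n) b, ?_⟩
  have hdec : compSeq τ K' b = wordApply (compSeq τ n) (compFrom τ n (K' - n) b) := by
    have := compFrom_add τ 0 n (K' - n) b
    rw [show n + (K' - n) = K' by omega] at this
    simpa [compSeq] using this
  exact (hK.trans hinf).trans (by rw [← hdec])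

end Part5
section Part6

variable {A : Type*} [DecidableEq A] [Fintype A]

lemma incMat_morComp (σ ρ : A → List A) :
    incMat (morComp σ ρ) = incMat σ * incMat ρ := by
  ext b a
  rw [Matrix.mul_apply]
  show ((wordApply σ (ρ a)).count b : ℤ) = _
  rw [count_wordApply]
  push_cast
  exact Finset.sum_congr rfl fun x _ => by
    show ((ρ a).count x : ℤ) * ((σ x).count b : ℤ) = incMat σ b x * incMat ρ x a
    unfold incMat
    simp [mul_comm]

lemma incMat_id : incMat (fun a : A => [a]) = 1 := by
  ext b a
  unfold incMat
  simp only [Matrix.of_apply, Matrix.one_apply]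
  rcases eq_or_ne b a with h | h
  · subst h; simp
  · rw [if_neg h]
    have : [a].count b = 0 := by
      simp [List.count_singleton]
      exact fun h' => h h'.symm
    simp [this]

lemma incMat_compFrom_det {τ : ℕ → A → List A} (huni : ∀ N, IsUnimodular (τ N)) :
    ∀ m n, (incMat (compFrom τ n m)).det = 1 ∨ (incMat (compFrom τ n m)).det = -1 := by
  intro m
  induction m with
  | zero =>
      intro n
      left
      show (incMat (fun a : A => [a])).det = 1
      rw [incMat_id, Matrix.det_one]
  | succ m ih =>
      intro n
      have : incMat (compFrom τ n (m + 1)) = incMat (compFrom τ n m) * incMat (τ (n + m)) :=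
        incMat_morComp _ _
      rw [this, Matrix.det_mul]
      rcases ih n with h1 | h1 <;> rcases huni (n + m) with h2 | h2 <;>
        rw [h1, h2] <;> norm_num

end Part6
section Part7

variable {A : Type*} [Fintype A] [DecidableEq A] [MeasurableSpace A]
  [MeasurableSingletonClass A] {X : Set (ℤ → A)}

/-- the cylinder of word `w` at position `i` inside `X`. -/
def Dset (X : Set (ℤ → A)) (i : ℤ) (w : List A) : Set X :=
  {x : X | ∀ k : Fin w.length, x.1 (i + (k.1 : ℤ)) = w.get k}

omit [Fintype A] [DecidableEq A] [MeasurableSingletonClass A] in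
lemma meas_coord (j : ℤ) : Measurable (fun x : X => x.1 j) :=
  (measurable_pi_apply j).comp measurable_subtype_coe

omit [Fintype A] [DecidableEq A] in
lemma Dset_measurable (i : ℤ) (w : List A) : MeasurableSet (Dset X i w) := by
  have : Dset X i w = ⋂ k : Fin w.length, (fun x : X => x.1 (i + (k.1 : ℤ))) ⁻¹' {w.get k} := by
    ext x; simp [Dset, Set.mem_iInter]
  rw [this]
  exact MeasurableSet.iInter fun k => (meas_coord _) (measurableSet_singleton _)

omit [Fintype A] [DecidableEq A] [MeasurableSingletonClass A] in
lemma Dset_zero (w : List A) : Dset X 0 w = cylWord X w := by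
  ext x; simp [Dset, cylWord]

omit [Fintype A] [DecidableEq A] [MeasurableSingletonClass A] in
lemma Dset_letter (b : A) : Dset X 0 [b] = cylLetter X b := by
  ext x
  simp [Dset, cylLetter, Fin.forall_fin_one]

omit [Fintype A] [DecidableEq A] [MeasurableSingletonClass A] in
lemma shiftOn_preimage (hS : ∀ x ∈ X, shift x ∈ X) (i : ℤ) (w : List A) :
    (shiftOn X hS) ⁻¹' (Dset X i w) = Dset X (i + 1) w := by
  ext x
  simp only [Dset, Set.mem_preimage, shiftOn, shift, Set.mem_setOf_eq]
  refine forall_congr' fun k => ?_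
  rw [show i + (k.1 : ℤ) + 1 = i + 1 + (k.1 : ℤ) by ring]

omit [Fintype A] [DecidableEq A] in
lemma measure_Dset {hS : ∀ x ∈ X, shift x ∈ X} {μ : Measure X}
    (hμ : InvProb (shiftOn X hS) μ) (w : List A) (i : ℤ) :
    μ (Dset X i w) = μ (Dset X 0 w) := by
  have hstep : ∀ j : ℤ, μ (Dset X (j + 1) w) = μ (Dset X j w) := by
    intro j
    rw [← shiftOn_preimage hS j w]
    exact hμ.2.measure_preimage (Dset_measurable j w).nullMeasurableSet
  induction i using Int.induction_on with
  | zero => rfl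
  | succ j ih => rw [hstep j, ih]
  | pred j ih => rw [← ih, ← hstep (-(j:ℤ) - 1)]; norm_num

/-- the coordinate-window vector of a point. -/
def winv (X : Set (ℤ → A)) (L : ℕ) (x : X) : Fin L → A := fun j => x.1 ((j : ℕ) : ℤ)

/-- the window word of a point. -/
def win (X : Set (ℤ → A)) (L : ℕ) (x : X) : List A := List.ofFn (winv X L x)

omit [Fintype A] [DecidableEq A] [MeasurableSingletonClass A] in
lemma win_length (L : ℕ) (x : X) : (win X L x).length = L := List.length_ofFn

omit [Fintype A] [DecidableEq A] [MeasurableSingletonClass A] in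
lemma winv_measurable (L : ℕ) : Measurable (winv X L) :=
  measurable_pi_lambda _ fun j => meas_coord _

omit [DecidableEq A] in
lemma comp_win_measurable (L : ℕ) (h : List A → ℝ) :
    Measurable (fun x : X => h (win X L x)) := by
  have : (fun x : X => h (win X L x))
      = (fun v : Fin L → A => h (List.ofFn v)) ∘ (winv X L) := rfl
  rw [this]
  exact (measurable_of_countable _).comp (winv_measurable L)

omit [DecidableEq A] in
lemma comp_win_integrable {μ : Measure X} [IsProbabilityMeasure μ] (L : ℕ)
    (h : List A → ℝ) (C : ℝ) (hC : ∀ x : X, |h (win X L x)| ≤ C) :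
    Integrable (fun x : X => h (win X L x)) μ :=
  Integrable.mono' (integrable_const C) (comp_win_measurable L h).aestronglyMeasurable
    (Filter.Eventually.of_forall fun x => by simpa using hC x)

omit [Fintype A] [DecidableEq A] [MeasurableSingletonClass A] in
lemma win_mem_lang {τ : ℕ → A → List A} (hX : X = SadicShift τ) (L : ℕ) (x : X) :
    win X L x ∈ SadicLang τ := by
  have hx : x.1 ∈ SadicShift τ := by rw [← hX]; exact x.2
  refine hx _ ⟨0, fun k => ?_⟩
  rw [zero_add]
  show x.1 ((k.1 : ℕ) : ℤ) = (win X L x).get k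
  exact (List.get_ofFn (winv X L x) k).symm

omit [Fintype A] [DecidableEq A] [MeasurableSingletonClass A] in
/-- prefix characterization via coordinates. -/
lemma prefix_iff_get {w t : List A} (hlen : w.length ≤ t.length) :
    w <+: t ↔ ∀ k : Fin w.length, t.get ⟨k, lt_of_lt_of_le k.2 hlen⟩ = w.get k := by
  constructor
  · rintro ⟨r, rfl⟩ k
    rw [List.get_eq_getElem, List.get_eq_getElem,
      List.getElem_append_left k.2]
  · intro h
    rw [List.prefix_iff_eq_take]
    apply List.ext_get (by simp [hlen]) fun i h1 h2 => ?_
    simp only [List.get_eq_getElem, List.getElem_take]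
    exact (h ⟨i, h1⟩).symm

omit [Fintype A] [DecidableEq A] [MeasurableSingletonClass A] in
lemma prefix_drop_win {x : X} {w : List A} {L i : ℕ} (hi : i + w.length ≤ L) :
    (w <+: (win X L x).drop i) ↔ x ∈ Dset X (i : ℤ) w := by
  have hlen : w.length ≤ ((win X L x).drop i).length := by
    rw [List.length_drop, win_length]; omega
  rw [prefix_iff_get hlen]
  refine forall_congr' fun k => ?_
  have hIk : i + (k : ℕ) < L := by have := k.2; omega
  have hwin : ((win X L x).drop i).get ⟨k, lt_of_lt_of_le k.2 hlen⟩
      = x.1 (((i + (k : ℕ) : ℕ)) : ℤ) := by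
    rw [List.get_eq_getElem, List.getElem_drop]
    show (List.ofFn (winv X L x))[i + (k:ℕ)]'(by rw [List.length_ofFn]; exact hIk) = _
    rw [List.getElem_ofFn]
    rfl
  rw [hwin]
  show _ ↔ x.1 ((i:ℤ) + ((k:ℕ) : ℤ)) = w.get k
  rw [show ((i + (k:ℕ) : ℕ) : ℤ) = (i:ℤ) + ((k:ℕ) : ℤ) by push_cast; ring]

end Part7
section Part8

variable {A : Type*} [Fintype A] [DecidableEq A] [MeasurableSpace A]
  [MeasurableSingletonClass A] {X : Set (ℤ → A)}

lemma occCnt_trunc {w z : List A} {N : ℕ} (hw : w ≠ [])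
    (hz : z.length = N + w.length) :
    occCnt w z z.length = occCnt w z (N + 1) := by
  have hℓ : 0 < w.length := List.length_pos_iff.2 hw
  unfold occCnt
  congr 1
  apply Finset.ext
  intro i
  simp only [Finset.mem_filter, Finset.mem_range]
  constructor
  · rintro ⟨hiL, hpre⟩
    refine ⟨?_, hpre⟩
    have := hpre.length_le
    rw [List.length_drop] at this
    omega
  · rintro ⟨hiN, hpre⟩
    exact ⟨by omega, hpre⟩

lemma integral_occCnt {hS : ∀ x ∈ X, shift x ∈ X} {μ : Measure X}
    (hμ : InvProb (shiftOn X hS) μ) {w : List A} (hw : w ≠ []) (N : ℕ) :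
    ∫ x, (occCnt w (win X (N + w.length) x) (N + w.length) : ℝ) ∂μ
      = ((N : ℝ) + 1) * (μ (cylWord X w)).toReal := by
  classical
  have : IsProbabilityMeasure μ := hμ.1
  set L := N + w.length with hL
  have hpt : ∀ x : X, (occCnt w (win X L x) L : ℝ)
      = ∑ i ∈ Finset.range (N + 1), (Dset X (i : ℤ) w).indicator (fun _ => (1:ℝ)) x := by
    intro x
    have h1 : occCnt w (win X L x) L = occCnt w (win X L x) (N + 1) := by
      have := occCnt_trunc (z := win X L x) (N := N) hw (by rw [win_length])
      rwa [win_length] at this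
    rw [h1]
    unfold occCnt
    rw [Finset.card_filter]
    push_cast
    refine Finset.sum_congr rfl fun i hi => ?_
    simp only [Finset.mem_range] at hi
    have hcond := prefix_drop_win (x := x) (w := w) (L := L) (i := i) (by omega)
    rw [Set.indicator_apply]
    split
    · next h => rw [if_pos (hcond.1 h)]
    · next h => rw [if_neg (fun hc => h (hcond.2 hc))]
  rw [MeasureTheory.integral_congr_ae (Filter.Eventually.of_forall hpt),
    MeasureTheory.integral_finset_sum]
  · have : ∀ i ∈ Finset.range (N + 1),
        ∫ x, (Dset X (i : ℤ) w).indicator (fun _ => (1:ℝ)) x ∂μ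
          = (μ (cylWord X w)).toReal := by
      intro i _
      rw [MeasureTheory.integral_indicator_const (1:ℝ) (Dset_measurable _ _), measureReal_def,
        measure_Dset hμ w (i : ℤ), Dset_zero]
      simp
    rw [Finset.sum_congr rfl this, Finset.sum_const, Finset.card_range]
    simp [add_comm]
  · intro i _
    exact (integrable_const (1:ℝ)).indicator (Dset_measurable _ _)

lemma integral_occCnt_letter {hS : ∀ x ∈ X, shift x ∈ X} {μ : Measure X}
    (hμ : InvProb (shiftOn X hS) μ) (b : A) {L : ℕ} (hL : 1 ≤ L) :
    ∫ x, (occCnt [b] (win X L x) L : ℝ) ∂μ = (L : ℝ) * (μ (cylLetter X b)).toReal := by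
  have h := integral_occCnt hμ (w := [b]) (by simp) (L - 1)
  have hL1 : L - 1 + [b].length = L := by simp; omega
  rw [hL1] at h
  rw [h]
  have : cylWord X [b] = cylLetter X b := by rw [← Dset_zero, Dset_letter]
  rw [this]
  congr 1
  rw [Nat.cast_sub hL]
  ring

end Part8
section Part9

variable {A : Type*} [Fintype A] [DecidableEq A]

/-- a good block-count vector for the word `u`. -/
def goodM (θ : A → List A) (H : ℕ) (u : List A) (m : A → ℕ) : Prop :=
  (∑ a : A, m a * (θ a).length ≤ u.length) ∧
  ∀ w p : List A, w.length ≤ p.length + 1 → (∀ a, p <+: θ a) →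
    occCnt w u u.length ≤ (∑ a : A, m a * occCnt w (θ a ++ p) (θ a).length)
        + (2 * H + w.length)
    ∧ (∑ a : A, m a * occCnt w (θ a ++ p) (θ a).length)
        ≤ occCnt w u u.length + (2 * H + w.length)

noncomputable def chooseM (θ : A → List A) (H : ℕ) (u : List A) : A → ℕ :=
  Classical.epsilon (goodM θ H u)

lemma chooseM_spec {θ : A → List A} {H : ℕ} {u : List A}
    (h : ∃ m, goodM θ H u m) : goodM θ H u (chooseM θ H u) :=
  Classical.epsilon_spec h

lemma exists_goodM {θ : A → List A} {H : ℕ} (hH : ∀ a, (θ a).length ≤ H)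
    {V u : List A} (hinf : u <:+: wordApply θ V) : ∃ m, goodM θ H u m :=
  main_count_estimate hH hinf

end Part9

section Part10

variable {A : Type*} [Fintype A] [DecidableEq A] [MeasurableSpace A]
  [MeasurableSingletonClass A]

/-- THE key formula: the measure of a word cylinder is a fixed linear combination
(independent of the measure) of the letter cylinder measures. -/
theorem key_formula [Nonempty A] {τ : ℕ → A → List A}
    (hner : ∀ n, NonErasing (τ n)) (hgrow : GrowsUnbounded τ)
    (hprim : IsPrimitive τ) (huni : ∀ n, IsUnimodular (τ n)) (hprop : ∀ n, IsProper (τ n))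
    {X : Set (ℤ → A)} (hX : X = SadicShift τ) (hS : ∀ x ∈ X, shift x ∈ X)
    {w : List A} (hw : w ≠ []) :
    ∃ r : A → ℝ, ∀ μ : Measure X, InvProb (shiftOn X hS) μ →
      (μ (cylWord X w)).toReal = ∑ b : A, r b * (μ (cylLetter X b)).toReal := by
  classical
  set ℓ := w.length with hℓdef
  have hℓ : 1 ≤ ℓ := List.length_pos_iff.2 hw
  obtain ⟨n, p, hp, hwp⟩ := exists_common_prefix hner hgrow hprim hprop ℓ
  set θ := compSeq τ n with hθdef
  have hθpos : ∀ a, 0 < (θ a).length := fun a => compFrom_length_pos hner n 0 a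
  set H := Finset.univ.sup (fun a => (θ a).length) with hHdef
  have hH : ∀ a, (θ a).length ≤ H := by
    intro a
    rw [hHdef]
    exact Finset.le_sup (f := fun a => (θ a).length) (Finset.mem_univ a)
  set c : A → ℕ := fun a => occCnt w (θ a ++ p) (θ a).length with hcdef
  set M : Matrix A A ℝ := (incMat θ).map (fun z : ℤ => (z : ℝ)) with hM
  have hdet : IsUnit M.det := by
    have h1 : M.det = (((incMat θ).det : ℤ) : ℝ) := by
      rw [hM, show ((incMat θ).map fun z : ℤ => (z:ℝ)) = (Int.castRingHom ℝ).mapMatrix (incMat θ)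
        from rfl, ← RingHom.map_det]
      rfl
    have hdet2 : (incMat θ).det = 1 ∨ (incMat θ).det = -1 := by
      rw [hθdef]
      exact incMat_compFrom_det huni n 0
    rcases hdet2 with h | h <;> rw [h1, h] <;> norm_num
  set cR : A → ℝ := fun a => (c a : ℝ) with hcR
  set r : A → ℝ := Matrix.vecMul cR M⁻¹ with hr
  refine ⟨r, ?_⟩
  intro μ hμ
  have : IsProbabilityMeasure μ := hμ.1
  set μw := (μ (cylWord X w)).toReal with hμw
  set e : A → ℝ := fun b => (μ (cylLetter X b)).toReal with he
  set ρ := ∑ b : A, r b * e b with hρ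
  set C₀ : ℝ := (2 * H + ℓ) + (∑ b : A, |r b|) * (2 * H + 1) with hC₀
  set C₁ : ℝ := C₀ + ((ℓ : ℝ) - 1) * |ρ| with hC₁
  have hmain : ∀ N : ℕ, ((N : ℝ) + 1) * |μw - ρ| ≤ C₁ := by
    intro N
    set L := N + ℓ with hLdef
    have hL1 : 1 ≤ L := by omega
    -- the block-count function
    set F : X → A → ℕ := fun x => chooseM θ H (win X L x) with hFdef
    have hF : ∀ x : X, goodM θ H (win X L x) (F x) := by
      intro x
      apply chooseM_spec
      obtain ⟨V, hV⟩ := lang_infix_level hprim (win_mem_lang hX L x) n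
      exact exists_goodM hH hV
    have hFb : ∀ (x : X) (a : A), F x a ≤ L := by
      intro x a
      have h1 := (hF x).1
      rw [win_length] at h1
      have h2 : F x a * (θ a).length ≤ L :=
        le_trans (Finset.single_le_sum (f := fun a => F x a * (θ a).length)
          (fun i _ => Nat.zero_le _) (Finset.mem_univ a)) h1
      have h3 : F x a ≤ F x a * (θ a).length := Nat.le_mul_of_pos_right _ (hθpos a)
      omega
    -- integrability
    have hint_occ : ∀ w' : List A, Integrable (fun x : X => (occCnt w' (win X L x) L : ℝ)) μ := by
      intro w'
      apply comp_win_integrable (μ := μ) L (fun u => (occCnt w' u L : ℝ)) L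
      intro x
      rw [abs_of_nonneg (by positivity)]
      exact_mod_cast occCnt_le w' (win X L x) L
    have hint_F : ∀ a : A, Integrable (fun x : X => (F x a : ℝ)) μ := by
      intro a
      apply comp_win_integrable (μ := μ) L (fun u => (chooseM θ H u a : ℝ)) L
      intro x
      rw [abs_of_nonneg (by positivity)]
      exact_mod_cast hFb x a
    set t : A → ℝ := fun a => ∫ x, (F x a : ℝ) ∂μ with ht
    -- estimate for w
    have hgsum : ∀ x : X, (∑ a : A, cR a * (F x a : ℝ))
        = ((∑ a : A, F x a * c a : ℕ) : ℝ) := by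
      intro x
      push_cast
      exact Finset.sum_congr rfl fun a _ => by rw [hcR]; ring
    have hintg : Integrable (fun x : X => ∑ a : A, cR a * (F x a : ℝ)) μ :=
      MeasureTheory.integrable_finset_sum _ fun a _ => (hint_F a).const_mul _
    have hptw : ∀ x : X, |(occCnt w (win X L x) L : ℝ)
        - ∑ a : A, cR a * (F x a : ℝ)| ≤ 2 * H + ℓ := by
      intro x
      have h1 := (hF x).2 w p hwp hp
      rw [win_length] at h1
      rw [hgsum x, abs_sub_le_iff]
      constructor
      · rw [sub_le_iff_le_add]
        calc ((occCnt w (win X L x) L : ℕ) : ℝ)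
            ≤ ((∑ a : A, F x a * c a) + (2 * H + ℓ) : ℕ) := by exact_mod_cast h1.1
          _ = _ := by push_cast; ring
      · rw [sub_le_iff_le_add]
        calc ((∑ a : A, F x a * c a : ℕ) : ℝ)
            ≤ ((occCnt w (win X L x) L + (2 * H + ℓ) : ℕ) : ℝ) := by exact_mod_cast h1.2
          _ = _ := by push_cast; ring
    have hI2 : |((N : ℝ) + 1) * μw - ∑ a : A, cR a * t a| ≤ 2 * H + ℓ := by
      have hIg : ∫ x, (∑ a : A, cR a * (F x a : ℝ)) ∂μ = ∑ a : A, cR a * t a := by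
        rw [MeasureTheory.integral_finset_sum _ fun a _ => (hint_F a).const_mul _]
        exact Finset.sum_congr rfl fun a _ => MeasureTheory.integral_const_mul _ _
      rw [← integral_occCnt hμ hw N, ← hIg]
      rw [← MeasureTheory.integral_sub (hint_occ w) hintg]
      calc |∫ x, ((occCnt w (win X L x) L : ℝ) - ∑ a : A, cR a * (F x a : ℝ)) ∂μ|
          ≤ ∫ x, |(occCnt w (win X L x) L : ℝ) - ∑ a : A, cR a * (F x a : ℝ)| ∂μ := by
            simpa [Real.norm_eq_abs] using norm_integral_le_integral_norm (μ := μ)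
              (fun x : X => (occCnt w (win X L x) L : ℝ) - ∑ a : A, cR a * (F x a : ℝ))
        _ ≤ ∫ _ : X, (2 * H + ℓ : ℝ) ∂μ := by
            apply MeasureTheory.integral_mono ((hint_occ w).sub hintg).abs
              (MeasureTheory.integrable_const _)
            exact hptw
        _ = 2 * H + ℓ := by simp
    -- estimates for letters
    have hMba : ∀ b a, M b a = ((θ a).count b : ℝ) := by
      intro b a
      rw [hM, Matrix.map_apply]
      unfold incMat
      push_cast
      rfl
    have hI3 : ∀ b : A, |(L : ℝ) * e b - (M.mulVec t) b| ≤ 2 * H + 1 := by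
      intro b
      have hsingle : ∀ a, occCnt [b] (θ a ++ []) (θ a).length = (θ a).count b := by
        intro a
        rw [List.append_nil, occCnt_singleton]
      have hgsum' : ∀ x : X, (∑ a : A, ((θ a).count b : ℝ) * (F x a : ℝ))
          = ((∑ a : A, F x a * occCnt [b] (θ a ++ []) (θ a).length : ℕ) : ℝ) := by
        intro x
        push_cast
        exact Finset.sum_congr rfl fun a _ => by rw [hsingle a]; ring
      have hintg' : Integrable (fun x : X => ∑ a : A, ((θ a).count b : ℝ) * (F x a : ℝ)) μ :=
        MeasureTheory.integrable_finset_sum _ fun a _ => (hint_F a).const_mul _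
      have hptw' : ∀ x : X, |(occCnt [b] (win X L x) L : ℝ)
          - ∑ a : A, ((θ a).count b : ℝ) * (F x a : ℝ)| ≤ 2 * H + 1 := by
        intro x
        have h1 := (hF x).2 [b] [] (by simp) (fun a => List.nil_prefix)
        rw [win_length] at h1
        rw [hgsum' x, abs_sub_le_iff]
        constructor
        · rw [sub_le_iff_le_add]
          calc ((occCnt [b] (win X L x) L : ℕ) : ℝ)
              ≤ (((∑ a : A, F x a * occCnt [b] (θ a ++ []) (θ a).length)
                  + (2 * H + [b].length) : ℕ) : ℝ) := by exact_mod_cast h1.1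
            _ = _ := by push_cast; simp; ring
        · rw [sub_le_iff_le_add]
          calc ((∑ a : A, F x a * occCnt [b] (θ a ++ []) (θ a).length : ℕ) : ℝ)
              ≤ ((occCnt [b] (win X L x) L + (2 * H + [b].length) : ℕ) : ℝ) := by
                exact_mod_cast h1.2
            _ = _ := by push_cast; simp; ring
      have hmv : (M.mulVec t) b = ∑ a : A, ((θ a).count b : ℝ) * t a := by
        rw [Matrix.mulVec]
        simp only [dotProduct]
        exact Finset.sum_congr rfl fun a _ => by rw [hMba b a]
      have hIg' : ∫ x, (∑ a : A, ((θ a).count b : ℝ) * (F x a : ℝ)) ∂μ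
          = ∑ a : A, ((θ a).count b : ℝ) * t a := by
        rw [MeasureTheory.integral_finset_sum _ fun a _ => (hint_F a).const_mul _]
        exact Finset.sum_congr rfl fun a _ => MeasureTheory.integral_const_mul _ _
      rw [hmv, ← integral_occCnt_letter hμ b hL1, ← hIg',
        ← MeasureTheory.integral_sub (hint_occ [b]) hintg']
      calc |∫ x, ((occCnt [b] (win X L x) L : ℝ)
              - ∑ a : A, ((θ a).count b : ℝ) * (F x a : ℝ)) ∂μ|
          ≤ ∫ x, |(occCnt [b] (win X L x) L : ℝ)
              - ∑ a : A, ((θ a).count b : ℝ) * (F x a : ℝ)| ∂μ :=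
          by simpa [Real.norm_eq_abs] using norm_integral_le_integral_norm (μ := μ)
              (fun x : X => (occCnt [b] (win X L x) L : ℝ)
                - ∑ a : A, ((θ a).count b : ℝ) * (F x a : ℝ))
        _ ≤ ∫ _ : X, (2 * H + 1 : ℝ) ∂μ := by
            apply MeasureTheory.integral_mono ((hint_occ [b]).sub hintg').abs
              (MeasureTheory.integrable_const _)
            exact hptw'
        _ = 2 * H + 1 := by simp
    -- linear algebra
    have hvm : Matrix.vecMul r M = cR := by
      rw [hr, Matrix.vecMul_vecMul, Matrix.nonsing_inv_mul M hdet, Matrix.vecMul_one]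
    have hI4 : ∑ a : A, cR a * t a = ∑ b : A, r b * (M.mulVec t) b := by
      calc ∑ a : A, cR a * t a = dotProduct cR t := by
            simp [dotProduct]
        _ = dotProduct (Matrix.vecMul r M) t := by rw [hvm]
        _ = dotProduct r (M.mulVec t) := (Matrix.dotProduct_mulVec r M t).symm
        _ = ∑ b : A, r b * (M.mulVec t) b := by simp [dotProduct]
    have hI5 : |∑ b : A, r b * (M.mulVec t) b - (L : ℝ) * ρ|
        ≤ (∑ b : A, |r b|) * (2 * H + 1) := by
      have hLρ : (L : ℝ) * ρ = ∑ b : A, r b * ((L : ℝ) * e b) := by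
        rw [hρ, Finset.mul_sum]
        exact Finset.sum_congr rfl fun b _ => by ring
      rw [hLρ, ← Finset.sum_sub_distrib]
      calc |∑ b : A, (r b * (M.mulVec t) b - r b * ((L:ℝ) * e b))|
          ≤ ∑ b : A, |r b * (M.mulVec t) b - r b * ((L:ℝ) * e b)| :=
            Finset.abs_sum_le_sum_abs _ _
        _ ≤ ∑ b : A, |r b| * (2 * H + 1) := by
            apply Finset.sum_le_sum
            intro b _
            rw [show r b * (M.mulVec t) b - r b * ((L:ℝ) * e b)
                = r b * ((M.mulVec t) b - (L:ℝ) * e b) by ring, abs_mul]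
            apply mul_le_mul_of_nonneg_left _ (abs_nonneg _)
            rw [abs_sub_comm]
            exact hI3 b
        _ = (∑ b : A, |r b|) * (2 * H + 1) := by rw [Finset.sum_mul]
    -- combine
    have hcomb : |((N : ℝ) + 1) * μw - (L : ℝ) * ρ| ≤ C₀ := by
      calc |((N : ℝ) + 1) * μw - (L : ℝ) * ρ|
          ≤ |((N : ℝ) + 1) * μw - ∑ a : A, cR a * t a|
            + |∑ a : A, cR a * t a - (L : ℝ) * ρ| := abs_sub_le _ _ _
        _ ≤ (2 * H + ℓ) + (∑ b : A, |r b|) * (2 * H + 1) := by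
            apply add_le_add hI2
            rw [hI4]
            exact hI5
        _ = C₀ := by rw [hC₀]
    have hLN : (L : ℝ) = ((N : ℝ) + 1) + ((ℓ : ℝ) - 1) := by
      rw [hLdef]; push_cast; ring
    have hsplit : ((N : ℝ) + 1) * (μw - ρ)
        = (((N : ℝ) + 1) * μw - (L : ℝ) * ρ) + ((ℓ : ℝ) - 1) * ρ := by
      rw [hLN]; ring
    calc ((N : ℝ) + 1) * |μw - ρ| = |((N : ℝ) + 1) * (μw - ρ)| := by
          rw [abs_mul, abs_of_nonneg (show (0:ℝ) ≤ (N:ℝ) + 1 by positivity)]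
      _ ≤ |((N : ℝ) + 1) * μw - (L : ℝ) * ρ| + |((ℓ : ℝ) - 1) * ρ| := by
          rw [hsplit]; exact abs_add_le _ _
      _ ≤ C₀ + ((ℓ : ℝ) - 1) * |ρ| := by
          apply add_le_add hcomb
          rw [abs_mul, abs_of_nonneg (by exact_mod_cast sub_nonneg.2 (by exact_mod_cast hℓ : (1:ℝ) ≤ (ℓ:ℝ)))]
      _ = C₁ := by rw [hC₁]
  -- conclude μw = ρ
  have hzero : μw - ρ = 0 := by
    by_contra hne
    have habs : 0 < |μw - ρ| := abs_pos.2 hne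
    obtain ⟨N, hN⟩ := exists_nat_gt (C₁ / |μw - ρ|)
    have h2 : C₁ < (N : ℝ) * |μw - ρ| := (div_lt_iff₀ habs).1 hN
    have h3 := hmain N
    nlinarith [abs_nonneg (μw - ρ)]
  exact sub_eq_zero.1 hzero

end Part10
section Part11

variable {A : Type*}

/-- interval cylinder on `[-k, k]` given by the `2k+1` values `v`. -/
def icyl (k : ℕ) (v : Fin (2 * k + 1) → A) : Set (ℤ → A) :=
  {x | ∀ j : Fin (2 * k + 1), x ((j : ℤ) - k) = v j}

lemma icyl_inter_of_le {k k' : ℕ} (hk : k ≤ k') (v : Fin (2 * k + 1) → A)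
    (v' : Fin (2 * k' + 1) → A) (hne : (icyl k v ∩ icyl k' v').Nonempty) :
    icyl k v ∩ icyl k' v' = icyl k' v' := by
  obtain ⟨x, hx, hx'⟩ := hne
  apply Set.inter_eq_self_of_subset_right
  intro y hy j
  have hjb : (j : ℤ) ≤ 2 * k := by exact_mod_cast Nat.lt_succ_iff.1 j.2
  set i : ℤ := (j : ℤ) - k with hi
  have hjb' : 0 ≤ i + k' ∧ i + k' ≤ 2 * k' := by constructor <;> omega
  set j' : Fin (2 * k' + 1) := ⟨(i + k').toNat, by omega⟩ with hj'
  have hco : (j' : ℤ) - k' = i := by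
    rw [hj']
    simp only
    rw [Int.toNat_of_nonneg hjb'.1]
    ring
  have h1 : y i = v' j' := by rw [← hco]; exact hy j'
  have h2 : x i = v' j' := by rw [← hco]; exact hx' j'
  have h3 : x i = v j := hx j
  rw [h1, ← h2]
  exact h3

lemma isPiSystem_icyl : IsPiSystem {s : Set (ℤ → A) | ∃ k v, s = icyl k v} := by
  rintro s ⟨k, v, rfl⟩ t ⟨k', v', rfl⟩ hne
  rcases le_total k k' with h | h
  · rw [icyl_inter_of_le h v v' hne]
    exact ⟨k', v', rfl⟩
  · rw [Set.inter_comm, icyl_inter_of_le h v' v (Set.inter_comm _ _ ▸ hne)]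
    exact ⟨k, v, rfl⟩

variable [Fintype A] [MeasurableSpace A] [MeasurableSingletonClass A]

lemma pi_eq_generateFrom_icyl :
    (inferInstance : MeasurableSpace (ℤ → A))
      = MeasurableSpace.generateFrom {s : Set (ℤ → A) | ∃ k v, s = icyl k v} := by
  apply le_antisymm
  · show MeasurableSpace.pi ≤ _
    rw [MeasurableSpace.pi]
    refine iSup_le fun i => ?_
    rw [MeasurableSpace.le_def]
    intro t ht
    obtain ⟨s', hs', rfl⟩ := MeasurableSpace.measurableSet_comap.1 ht
    have hsingle : ∀ a : A,
        MeasurableSet[MeasurableSpace.generateFrom {s : Set (ℤ → A) | ∃ k v, s = icyl k v}]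
          ((fun x : ℤ → A => x i) ⁻¹' {a}) := by
      intro a
      set k := i.natAbs with hk
      have hnn : 0 ≤ i + (k : ℤ) := by omega
      have hub : (i + (k : ℤ)).toNat < 2 * k + 1 := by omega
      set j₀ : Fin (2 * k + 1) := ⟨(i + (k : ℤ)).toNat, hub⟩ with hj₀
      have hco : (j₀ : ℤ) - k = i := by
        rw [hj₀]
        simp only
        rw [Int.toNat_of_nonneg hnn]
        ring
      have hdec : (fun x : ℤ → A => x i) ⁻¹' {a}
          = ⋃ (v : Fin (2 * k + 1) → A) (_ : v j₀ = a), icyl k v := by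
        ext x
        simp only [Set.mem_preimage, Set.mem_singleton_iff, Set.mem_iUnion]
        constructor
        · intro hxa
          refine ⟨fun j => x ((j : ℤ) - k), ?_, fun j => rfl⟩
          show x ((j₀ : ℤ) - k) = a
          rw [hco, hxa]
        · rintro ⟨v, hva, hxv⟩
          have := hxv j₀
          rw [hco, hva] at this
          exact this
      rw [hdec]
      refine MeasurableSet.iUnion fun v => MeasurableSet.iUnion fun hv => ?_
      exact MeasurableSpace.measurableSet_generateFrom ⟨k, v, rfl⟩
    have hdecs : (fun x : ℤ → A => x i) ⁻¹' s' = ⋃ a ∈ s', (fun x : ℤ → A => x i) ⁻¹' {a} := by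
      ext x; simp
    rw [hdecs]
    exact (Set.toFinite s').measurableSet_biUnion fun a _ => hsingle a
  · rw [MeasurableSpace.generateFrom_le_iff]
    rintro s ⟨k, v, rfl⟩
    have : icyl k v = ⋂ j : Fin (2 * k + 1), (fun x : ℤ → A => x ((j : ℤ) - k)) ⁻¹' {v j} := by
      ext x; simp [icyl]
    rw [this]
    exact MeasurableSet.iInter fun j => (measurable_pi_apply _) (measurableSet_singleton _)

/-- preimage of an interval cylinder in `X` is a `Dset`. -/
lemma preimage_icyl (X : Set (ℤ → A)) (k : ℕ) (v : Fin (2 * k + 1) → A) :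
    (Subtype.val ⁻¹' icyl k v : Set X) = Dset X (-(k : ℤ)) (List.ofFn v) := by
  ext x
  simp only [Set.mem_preimage, icyl, Set.mem_setOf_eq, Dset]
  constructor
  · intro h jj
    have hjj : (jj : ℕ) < 2 * k + 1 := lt_of_lt_of_le jj.2 (by simp)
    have h2 := h ⟨jj, hjj⟩
    rw [show ((⟨jj, hjj⟩ : Fin (2 * k + 1)) : ℤ) - k = -(k : ℤ) + (jj : ℤ) by push_cast; ring]
      at h2
    rw [h2, List.get_ofFn]
    rfl
  · intro h j
    have hj : (j : ℕ) < (List.ofFn v).length := lt_of_lt_of_le j.2 (by simp)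
    have h2 := h ⟨j, hj⟩
    rw [show -(k : ℤ) + ((⟨j, hj⟩ : Fin (List.ofFn v).length) : ℤ) = (j : ℤ) - k
      by push_cast; ring] at h2
    rw [h2, List.get_ofFn]
    rfl

end Part11
theorem stmt8 {A : Type*} [Fintype A] [DecidableEq A] [TopologicalSpace A] [DiscreteTopology A]
    [MeasurableSpace A] [MeasurableSingletonClass A] (hcard : 2 ≤ Fintype.card A)
    (τ : ℕ → A → List A) (hner : ∀ n, NonErasing (τ n)) (hgrow : GrowsUnbounded τ)
    (hprim : IsPrimitive τ) (huni : ∀ n, IsUnimodular (τ n)) (hprop : ∀ n, IsProper (τ n))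
    (X : Set (ℤ → A)) (hX : X = SadicShift τ)
    (hS : ∀ x ∈ X, shift x ∈ X)
    (μ μ' : Measure ↥X)
    (hμ : InvProb (shiftOn X hS) μ) (hμ' : InvProb (shiftOn X hS) μ')
    (heq : ∀ a : A, μ (cylLetter X a) = μ' (cylLetter X a)) :
    μ = μ' := by
  classical
  haveI hA : Nonempty A := Fintype.card_pos_iff.1 (by omega)
  haveI := hμ.1
  haveI := hμ'.1
  -- word cylinder measures agree
  have hword : ∀ w : List A, w ≠ [] → μ (cylWord X w) = μ' (cylWord X w) := by
    intro w hw
    obtain ⟨r, hr⟩ := key_formula hner hgrow hprim huni hprop hX hS hw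
    have h1 := hr μ hμ
    have h2 := hr μ' hμ'
    have hRHS : (∑ b : A, r b * (μ (cylLetter X b)).toReal)
        = ∑ b : A, r b * (μ' (cylLetter X b)).toReal :=
      Finset.sum_congr rfl fun b _ => by rw [heq b]
    rw [hRHS, ← h2] at h1
    exact (ENNReal.toReal_eq_toReal_iff' (measure_ne_top μ _) (measure_ne_top μ' _)).1 h1
  -- interval cylinder measures agree
  have hD : ∀ (k : ℕ) (v : Fin (2 * k + 1) → A),
      μ (Dset X (-(k : ℤ)) (List.ofFn v)) = μ' (Dset X (-(k : ℤ)) (List.ofFn v)) := by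
    intro k v
    rw [measure_Dset hμ _ _, measure_Dset hμ' _ _, Dset_zero]
    apply hword
    have hlen : (List.ofFn v).length = 2 * k + 1 := List.length_ofFn
    intro hnil
    rw [hnil] at hlen
    simp at hlen
  -- extend to all measurable sets via the π-system of interval cylinders
  have hgen : (Subtype.instMeasurableSpace : MeasurableSpace ↥X)
      = MeasurableSpace.generateFrom
          ((Set.preimage (Subtype.val : X → ℤ → A))
            '' {s : Set (ℤ → A) | ∃ k v, s = icyl k v}) := by
    have h0 : (Subtype.instMeasurableSpace : MeasurableSpace ↥X)
        = MeasurableSpace.comap Subtype.val (inferInstance) := rfl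
    rw [h0, pi_eq_generateFrom_icyl (A := A), MeasurableSpace.comap_generateFrom]
  have hpi : IsPiSystem ((Set.preimage (Subtype.val : X → ℤ → A))
      '' {s : Set (ℤ → A) | ∃ k v, s = icyl k v}) := by
    rintro s ⟨s₀, hs₀, rfl⟩ t ⟨t₀, ht₀, rfl⟩ hne
    refine ⟨s₀ ∩ t₀, ?_, by rw [Set.preimage_inter]⟩
    apply isPiSystem_icyl s₀ hs₀ t₀ ht₀
    obtain ⟨x, hx1, hx2⟩ := hne
    exact ⟨x.1, hx1, hx2⟩
  refine MeasureTheory.ext_of_generate_finite _ hgen hpi ?_ ?_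
  · rintro s ⟨s₀, ⟨k, v, rfl⟩, rfl⟩
    rw [preimage_icyl]
    exact hD k v
  · rw [measure_univ, measure_univ]
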